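/- Let x ∈ (0,1)^N and set V = Σ_{i=1}^N x_i. Then (1/V)·Σ_{i=1}^N (β b_i(x)(1 − x_i) − δ x_i) ≥ β d_min − β λ1 |x| − δ. -/

import Mathlib

open Matrix in
lemma quad_form_le_of_eig_le {N : ℕ} (A : Matrix (Fin N) (Fin N) ℝ)
    (hA : A.IsHermitian) (lam : ℝ)
    (hmax : ∀ i, hA.eigenvalues i ≤ lam) (v : Fin N → ℝ) :
    v ⬝ᵥ A *ᵥ v ≤ lam * (v ⬝ᵥ v) := by
  classical
  set U : Matrix (Fin N) (Fin N) ℝ := (hA.eigenvectorUnitary : Matrix (Fin N) (Fin N) ℝ) with hU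
  have hUU : U * star U = 1 := (Matrix.mem_unitaryGroup_iff).mp hA.eigenvectorUnitary.2
  set y : Fin N → ℝ := star U *ᵥ v with hy
  have hvecMul : v ᵥ* U = y := by
    rw [hy, Matrix.star_eq_conjTranspose, Matrix.conjTranspose_eq_transpose_of_trivial,
      Matrix.mulVec_transpose]
  have hquad : v ⬝ᵥ A *ᵥ v = ∑ i, hA.eigenvalues i * (y i)^2 := by
    conv_lhs => rw [hA.spectral_theorem]
    rw [Unitary.conjStarAlgAut_apply, ← hU]
    rw [← Matrix.mulVec_mulVec, ← Matrix.mulVec_mulVec, Matrix.dotProduct_mulVec, hvecMul, ← hy]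
    simp [Matrix.mulVec_diagonal, dotProduct, mul_comm, sq, mul_assoc, mul_left_comm]
  have hnorm : y ⬝ᵥ y = v ⬝ᵥ v := by
    calc y ⬝ᵥ y = (v ᵥ* U) ⬝ᵥ (star U *ᵥ v) := by rw [hvecMul, ← hy]
      _ = v ⬝ᵥ (U *ᵥ (star U *ᵥ v)) := (Matrix.dotProduct_mulVec v U _).symm
      _ = v ⬝ᵥ v := by rw [Matrix.mulVec_mulVec, hUU, Matrix.one_mulVec]
  rw [hquad, ← hnorm]
  have : lam * (y ⬝ᵥ y) = ∑ i, lam * (y i)^2 := by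
    simp [dotProduct, Finset.mul_sum, sq]
  rw [this]
  exact Finset.sum_le_sum fun i _ => mul_le_mul_of_nonneg_right (hmax i) (sq_nonneg _)

/-- Drift lower bound used in Theorem 4.2 (asymptotic bound of the time average): for
`x ∈ (0,1)^N` and `V = ∑ᵢ xᵢ`,
`(1/V) ∑ i (β b_i(x)(1-x_i) - δ x_i) ≥ β d_min - β λ₁ |x| - δ`. -/
theorem drift_lower_bound
    (N : ℕ) (hN : 1 ≤ N)
    (A : Matrix (Fin N) (Fin N) ℝ)
    (hA_symm : A.IsSymm)
    (hA_01 : ∀ i j, A i j = 0 ∨ A i j = 1)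
    (hA_diag : ∀ i, A i i = 0)
    (lam1 : ℝ)
    (hlam1_eig : ∃ v : Fin N → ℝ, v ≠ 0 ∧ A.mulVec v = lam1 • v)
    (hlam1_max : ∀ (μ : ℝ) (v : Fin N → ℝ), v ≠ 0 → A.mulVec v = μ • v → μ ≤ lam1)
    (dmin : ℝ)
    (hdmin_le : ∀ i, dmin ≤ ∑ j, A i j)
    (hdmin_mem : ∃ i, dmin = ∑ j, A i j)
    (β δ : ℝ) (hβ : 0 ≤ β) (hδ : 0 ≤ δ)
    (x : Fin N → ℝ) (hx : ∀ i, x i ∈ Set.Ioo (0 : ℝ) 1)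
    (V : ℝ) (hV : V = ∑ i, x i) :
    (1 / V) * ∑ i, (β * (∑ j, A i j * x j) * (1 - x i) - δ * x i)
      ≥ β * dmin - β * lam1 * Real.sqrt (∑ i, (x i) ^ 2) - δ := by
    classical
  haveI : NeZero N := ⟨by omega⟩
  have hA : A.IsHermitian := by
    rw [Matrix.IsHermitian, Matrix.conjTranspose_eq_transpose_of_trivial]; exact hA_symm
  have hmax : ∀ i, hA.eigenvalues i ≤ lam1 := by
    intro i
    refine hlam1_max _ _ ?_ (hA.mulVec_eigenvectorBasis i)
    have h := hA.eigenvectorBasis.orthonormal.ne_zero i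
    intro hc
    exact h (by ext j; exact congrFun hc j)
  have hquad : ∀ v : Fin N → ℝ, dotProduct v (A.mulVec v) ≤ lam1 * dotProduct v v :=
    quad_form_le_of_eig_le A hA lam1 hmax
  -- lam1 ≥ 0
  have hlam_nonneg : 0 ≤ lam1 := by
    have h := hquad (Pi.single (0 : Fin N) 1)
    simpa [dotProduct, Matrix.mulVec, Pi.single_apply, hA_diag] using h
  set s : ℝ := Real.sqrt (∑ i, (x i) ^ 2) with hs
  have hVpos : 0 < V := by
    rw [hV]
    exact Finset.sum_pos (fun i _ => (hx i).1) Finset.univ_nonempty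
  have hsV : s ≤ V := by
    have h1 : ∑ i, (x i) ^ 2 ≤ (∑ i, x i) ^ 2 :=
      Finset.sum_sq_le_sq_sum_of_nonneg (fun i _ => (hx i).1.le)
    calc s ≤ Real.sqrt ((∑ i, x i) ^ 2) := Real.sqrt_le_sqrt h1
      _ = ∑ i, x i := Real.sqrt_sq (Finset.sum_nonneg fun i _ => (hx i).1.le)
      _ = V := hV.symm
  have hs_nonneg : 0 ≤ s := Real.sqrt_nonneg _
  have hs_sq : s * s = ∑ i, (x i) ^ 2 := Real.mul_self_sqrt
    (Finset.sum_nonneg fun i _ => sq_nonneg _)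
  -- quadratic form bound
  have hQ : ∑ i, x i * (∑ j, A i j * x j) ≤ lam1 * s * V := by
    have h1 : dotProduct x (A.mulVec x) = ∑ i, x i * (∑ j, A i j * x j) := by
      simp [dotProduct, Matrix.mulVec]
    have h2 : dotProduct x x = ∑ i, (x i) ^ 2 := by
      simp [dotProduct, sq]
    have h3 := hquad x
    rw [h1, h2, ← hs_sq] at h3
    calc ∑ i, x i * (∑ j, A i j * x j) ≤ lam1 * (s * s) := h3
      _ = (lam1 * s) * s := by ring
      _ ≤ (lam1 * s) * V := by
          exact mul_le_mul_of_nonneg_left hsV (mul_nonneg hlam_nonneg hs_nonneg)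
      _ = lam1 * s * V := rfl
  -- row sums bound
  have hrow : dmin * V ≤ ∑ i, ∑ j, A i j * x j := by
    have hswap : ∑ i, ∑ j, A i j * x j = ∑ j, (∑ i, A j i) * x j := by
      rw [Finset.sum_comm]
      refine Finset.sum_congr rfl fun j _ => ?_
      rw [Finset.sum_mul]
      exact Finset.sum_congr rfl fun i _ => by rw [hA_symm.apply j i]
    rw [hswap, hV, Finset.mul_sum]
    exact Finset.sum_le_sum fun j _ =>
      mul_le_mul_of_nonneg_right (hdmin_le j) (hx j).1.le
  -- expand the sum
  have hexpand : ∑ i, (β * (∑ j, A i j * x j) * (1 - x i) - δ * x i)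
      = β * (∑ i, ∑ j, A i j * x j) - β * (∑ i, x i * (∑ j, A i j * x j)) - δ * V := by
    rw [hV, Finset.mul_sum, Finset.mul_sum, Finset.mul_sum, ← Finset.sum_sub_distrib,
      ← Finset.sum_sub_distrib]
    exact Finset.sum_congr rfl fun i _ => by ring
  rw [ge_iff_le, one_div_mul_eq_div, le_div_iff₀ hVpos, hexpand]
  have h1 : β * (dmin * V) ≤ β * (∑ i, ∑ j, A i j * x j) :=
    mul_le_mul_of_nonneg_left hrow hβ
  have h2 : β * (∑ i, x i * (∑ j, A i j * x j)) ≤ β * (lam1 * s * V) :=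
    mul_le_mul_of_nonneg_left hQ hβ
  nlinarith [h1, h2]
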